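/- For n = 1, let f be the function f = Σ_{n≥1} c_n (χ_{(a_n, a_n + 1/a_n)}/γ(a_n, a_n + 1/a_n) − χ_{(a_n', a_n' + 1/a_n')}/γ(a_n', a_n' + 1/a_n')), where (a_n), (a_n') are increasing sequences in (2, ∞) with a_n + 2/a_n < a_n', a_n' + 2/a_n' < a_{n+1} < 2a_n, and c_n > 0. Then E(f) := ∫₀^∞ x(|∫_x^∞ f dγ| + |∫_{−∞}^{−x} f dγ|) dx is finite if and only if Σ c_n a_n (a_n' − a_n) < ∞, up to two-sided constant bounds: there exist absolute constants c, C > 0 with c·Σ c_n a_n(a_n'−a_n) ≤ E(f) ≤ C·Σ c_n a_n(a_n'−a_n). -/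

import Mathlib

open MeasureTheory
open scoped ENNReal

/-- The Gauss measure on ℝ, with density `π^{-1/2} e^{-x²}`. -/
noncomputable def gauss1 : Measure ℝ :=
  volume.withDensity fun x => ENNReal.ofReal (Real.pi ^ (-(1 : ℝ) / 2) * Real.exp (-x ^ 2))

/-- `mrad t = min(1, 1/t)`, equal to `1` when `t ≤ 1`. -/
noncomputable def mrad (t : ℝ) : ℝ := if t ≤ 1 then 1 else 1 / t

open Set

lemma gauss1_apply {s : Set ℝ} (hs : MeasurableSet s) :
    gauss1 s = ∫⁻ x in s, ENNReal.ofReal (Real.pi ^ (-(1 : ℝ) / 2) * Real.exp (-x ^ 2)) := by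
  rw [gauss1, withDensity_apply _ hs]

lemma pi_pow_pos : 0 < Real.pi ^ (-(1 : ℝ) / 2) := Real.rpow_pos_of_pos Real.pi_pos _

lemma gauss1_Ioo_lt_top (u v : ℝ) : gauss1 (Ioo u v) < ∞ := by
  rw [gauss1_apply measurableSet_Ioo]
  calc ∫⁻ x in Ioo u v, ENNReal.ofReal (Real.pi ^ (-(1 : ℝ) / 2) * Real.exp (-x ^ 2))
      ≤ ∫⁻ _ in Ioo u v, ENNReal.ofReal (Real.pi ^ (-(1 : ℝ) / 2)) := by
        refine lintegral_mono fun x => ENNReal.ofReal_le_ofReal ?_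
        nlinarith [Real.exp_le_one_iff.2 (neg_nonpos.2 (sq_nonneg x)), Real.exp_pos (-x^2), pi_pow_pos]
    _ = ENNReal.ofReal (Real.pi ^ (-(1 : ℝ) / 2)) * volume (Ioo u v) := by
        rw [setLIntegral_const]
    _ < ∞ := by
        rw [Real.volume_Ioo]
        exact ENNReal.mul_lt_top ENNReal.ofReal_lt_top ENNReal.ofReal_lt_top

lemma gauss1_Ioo_pos {u v : ℝ} (h : u < v) : 0 < gauss1 (Ioo u v) := by
  rw [gauss1_apply measurableSet_Ioo]
  have key : ∀ x ∈ Ioo u v,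
      ENNReal.ofReal (Real.pi ^ (-(1 : ℝ) / 2) * Real.exp (-(max (u^2) (v^2)))) ≤
      ENNReal.ofReal (Real.pi ^ (-(1 : ℝ) / 2) * Real.exp (-x ^ 2)) := by
    intro x hx
    refine ENNReal.ofReal_le_ofReal ?_
    have hx2 : x ^ 2 ≤ max (u^2) (v^2) := by
      rcases le_or_gt 0 x with h0 | h0
      · exact le_max_of_le_right (by nlinarith [hx.2])
      · exact le_max_of_le_left (by nlinarith [hx.1])
    exact mul_le_mul_of_nonneg_left (Real.exp_le_exp.2 (by linarith)) pi_pow_pos.le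
  calc (0 : ℝ≥0∞) <
      ENNReal.ofReal (Real.pi ^ (-(1 : ℝ) / 2) * Real.exp (-(max (u^2) (v^2)))) * volume (Ioo u v) := by
        rw [Real.volume_Ioo]
        exact ENNReal.mul_pos (ne_of_gt (ENNReal.ofReal_pos.2 (by positivity)))
          (ne_of_gt (ENNReal.ofReal_pos.2 (by linarith)))
    _ = ∫⁻ _ in Ioo u v, ENNReal.ofReal (Real.pi ^ (-(1 : ℝ) / 2) * Real.exp (-(max (u^2) (v^2)))) := by
        rw [setLIntegral_const]
    _ ≤ _ := setLIntegral_mono (by fun_prop) key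

lemma gauss1_Ioo_toReal_pos {u v : ℝ} (h : u < v) : 0 < (gauss1 (Ioo u v)).toReal :=
  ENNReal.toReal_pos (ne_of_gt (gauss1_Ioo_pos h)) (gauss1_Ioo_lt_top u v).ne

/-- The normalized bump ratio. -/
noncomputable def ratio (u v x : ℝ) : ℝ :=
  (gauss1 (Ioi x ∩ Ioo u v)).toReal / (gauss1 (Ioo u v)).toReal

lemma bump_integrable (u v : ℝ) (μ : Measure ℝ) (hμ : μ (Ioo u v) < ∞) (m : ℝ) :
    Integrable (fun y => (Ioo u v).indicator (fun _ => (1:ℝ)) y / m) μ := by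
  have : Integrable ((Ioo u v).indicator (fun _ => (1:ℝ))) μ :=
    (integrable_indicator_iff measurableSet_Ioo).2 (integrableOn_const hμ.ne)
  simpa [div_eq_mul_inv] using this.mul_const m⁻¹

lemma bump_setIntegral (u v x : ℝ) :
    ∫ y in Ioi x, (Ioo u v).indicator (fun _ => (1:ℝ)) y / (gauss1 (Ioo u v)).toReal ∂gauss1
      = ratio u v x := by
  rw [integral_div, setIntegral_indicator measurableSet_Ioo, setIntegral_const, ratio]
  simp
  rfl

lemma ratio_nonneg (u v x : ℝ) : 0 ≤ ratio u v x := by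
  unfold ratio; positivity

lemma ratio_le_one (u v x : ℝ) : ratio u v x ≤ 1 := by
  unfold ratio
  rcases le_or_gt v u with h | h
  · simp [Ioo_eq_empty_of_le h]
  · rw [div_le_one (gauss1_Ioo_toReal_pos h)]
    exact ENNReal.toReal_mono (gauss1_Ioo_lt_top u v).ne (measure_mono inter_subset_right)

lemma ratio_eq_one {u v x : ℝ} (h : u < v) (hx : x ≤ u) : ratio u v x = 1 := by
  unfold ratio
  have : Ioi x ∩ Ioo u v = Ioo u v := inter_eq_right.2 (fun y hy => lt_of_le_of_lt hx hy.1)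
  rw [this, div_self (gauss1_Ioo_toReal_pos h).ne']

lemma ratio_eq_zero {u v x : ℝ} (hx : v ≤ x) : ratio u v x = 0 := by
  unfold ratio
  have : Ioi x ∩ Ioo u v = ∅ := by
    ext y; simp only [mem_inter_iff, mem_Ioi, mem_Ioo, mem_empty_iff_false, iff_false]
    rintro ⟨h1, _, h3⟩; linarith
  simp [this]

lemma bump_lint_le (u v x : ℝ) (h : u < v) (c : ℝ) (hc : 0 ≤ c) :
    ∫⁻ y in Ioi x, ENNReal.ofReal
        (c * ((Ioo u v).indicator (fun _ => (1:ℝ)) y / (gauss1 (Ioo u v)).toReal)) ∂gauss1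
      ≤ ENNReal.ofReal c := by
  set m := (gauss1 (Ioo u v)).toReal with hm
  have hm0 : 0 < m := gauss1_Ioo_toReal_pos h
  have hpt : ∀ y, ENNReal.ofReal (c * ((Ioo u v).indicator (fun _ => (1:ℝ)) y / m))
      = (Ioo u v).indicator (fun _ => ENNReal.ofReal (c / m)) y := by
    intro y
    by_cases hy : y ∈ Ioo u v <;> simp [Set.indicator_apply, hy, mul_div_assoc, div_eq_mul_inv]
  calc ∫⁻ y in Ioi x, ENNReal.ofReal (c * ((Ioo u v).indicator (fun _ => (1:ℝ)) y / m)) ∂gauss1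
      = ∫⁻ y in Ioi x, (Ioo u v).indicator (fun _ => ENNReal.ofReal (c / m)) y ∂gauss1 := by
        exact lintegral_congr fun y => hpt y
    _ = ENNReal.ofReal (c / m) * (gauss1.restrict (Ioi x)) (Ioo u v) :=
        lintegral_indicator_const measurableSet_Ioo _
    _ ≤ ENNReal.ofReal (c / m) * gauss1 (Ioo u v) := by
        gcongr
        exact Measure.restrict_le_self
    _ = ENNReal.ofReal (c / m) * ENNReal.ofReal m := by
        rw [ENNReal.ofReal_toReal (gauss1_Ioo_lt_top u v).ne]
    _ = ENNReal.ofReal c := by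
        rw [← ENNReal.ofReal_mul (by positivity), div_mul_cancel₀ _ hm0.ne']

lemma F_formula (a a' cf : ℕ → ℝ) (ha : ∀ k, 0 < a k) (ha' : ∀ k, 0 < a' k)
    (hcf : ∀ k, 0 ≤ cf k) (hsum : Summable cf) (x : ℝ) :
    ∫ y in Ioi x, (∑' k, cf k *
        ((Ioo (a k) (a k + 1 / a k)).indicator (fun _ => (1 : ℝ)) y /
            (gauss1 (Ioo (a k) (a k + 1 / a k))).toReal -
          (Ioo (a' k) (a' k + 1 / a' k)).indicator (fun _ => (1 : ℝ)) y /
            (gauss1 (Ioo (a' k) (a' k + 1 / a' k))).toReal)) ∂gauss1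
      = ∑' k, cf k * (ratio (a k) (a k + 1/a k) x - ratio (a' k) (a' k + 1/a' k) x) := by
  have hlen : ∀ k, a k < a k + 1 / a k := fun k => by
    have := ha k; nlinarith [one_div_pos.2 (ha k)]
  have hlen' : ∀ k, a' k < a' k + 1 / a' k := fun k => by
    have := ha' k; nlinarith [one_div_pos.2 (ha' k)]
  set g : ℕ → ℝ → ℝ := fun k y => cf k *
        ((Ioo (a k) (a k + 1 / a k)).indicator (fun _ => (1 : ℝ)) y /
            (gauss1 (Ioo (a k) (a k + 1 / a k))).toReal -
          (Ioo (a' k) (a' k + 1 / a' k)).indicator (fun _ => (1 : ℝ)) y /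
            (gauss1 (Ioo (a' k) (a' k + 1 / a' k))).toReal) with hg
  have hmeas : ∀ k, AEStronglyMeasurable (g k) (gauss1.restrict (Ioi x)) := by
    intro k
    refine (Measurable.const_mul (Measurable.sub ?_ ?_) _).aestronglyMeasurable <;>
      exact (measurable_const.indicator measurableSet_Ioo).div_const _
  have hbound : ∀ k, ∫⁻ y in Ioi x, ‖g k y‖₊ ∂gauss1 ≤ ENNReal.ofReal (cf k + cf k) := by
    intro k
    set A : ℝ → ℝ := fun y => (Ioo (a k) (a k + 1 / a k)).indicator (fun _ => (1 : ℝ)) y /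
        (gauss1 (Ioo (a k) (a k + 1 / a k))).toReal with hA
    set B : ℝ → ℝ := fun y => (Ioo (a' k) (a' k + 1 / a' k)).indicator (fun _ => (1 : ℝ)) y /
        (gauss1 (Ioo (a' k) (a' k + 1 / a' k))).toReal with hB
    have hA0 : ∀ y, 0 ≤ A y := fun y => by
      have : (0:ℝ) ≤ (Ioo (a k) (a k + 1 / a k)).indicator (fun _ => (1 : ℝ)) y :=
        Set.indicator_nonneg (fun _ _ => zero_le_one) y
      positivity
    have hB0 : ∀ y, 0 ≤ B y := fun y => by
      have : (0:ℝ) ≤ (Ioo (a' k) (a' k + 1 / a' k)).indicator (fun _ => (1 : ℝ)) y :=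
        Set.indicator_nonneg (fun _ _ => zero_le_one) y
      positivity
    have hpt : ∀ y, (‖g k y‖₊ : ℝ≥0∞) ≤
        ENNReal.ofReal (cf k * A y) + ENNReal.ofReal (cf k * B y) := by
      intro y
      rw [show (‖g k y‖₊ : ℝ≥0∞) = ENNReal.ofReal |g k y| from Real.enorm_eq_ofReal_abs _, ← ENNReal.ofReal_add (mul_nonneg (hcf k) (hA0 y)) (mul_nonneg (hcf k) (hB0 y))]
      refine ENNReal.ofReal_le_ofReal ?_
      rw [hg]
      calc |cf k * (A y - B y)| = cf k * |A y - B y| := by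
            rw [abs_mul, abs_of_nonneg (hcf k)]
        _ ≤ cf k * (A y + B y) := by
            refine mul_le_mul_of_nonneg_left ?_ (hcf k)
            refine (abs_sub _ _).trans ?_
            rw [abs_of_nonneg (hA0 y), abs_of_nonneg (hB0 y)]
        _ = cf k * A y + cf k * B y := by ring
    calc ∫⁻ y in Ioi x, ‖g k y‖₊ ∂gauss1
        ≤ ∫⁻ y in Ioi x, (ENNReal.ofReal (cf k * A y) + ENNReal.ofReal (cf k * B y)) ∂gauss1 :=
          lintegral_mono hpt
      _ = (∫⁻ y in Ioi x, ENNReal.ofReal (cf k * A y) ∂gauss1) +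
          ∫⁻ y in Ioi x, ENNReal.ofReal (cf k * B y) ∂gauss1 := by
          refine lintegral_add_left ?_ _
          exact (((measurable_const.indicator measurableSet_Ioo).div_const
            _).const_mul _).ennreal_ofReal
      _ ≤ ENNReal.ofReal (cf k) + ENNReal.ofReal (cf k) := by
          gcongr
          · exact bump_lint_le _ _ x (hlen k) _ (hcf k)
          · exact bump_lint_le _ _ x (hlen' k) _ (hcf k)
      _ = ENNReal.ofReal (cf k + cf k) := by
          rw [ENNReal.ofReal_add (hcf k) (hcf k)]
  have hne : ∑' k, ∫⁻ y in Ioi x, ‖g k y‖₊ ∂gauss1 ≠ ∞ := by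
    refine ne_top_of_le_ne_top ?_ (ENNReal.tsum_le_tsum hbound)
    rw [← ENNReal.ofReal_tsum_of_nonneg (fun k => by linarith [hcf k]) (hsum.add hsum)]
    exact ENNReal.ofReal_lt_top.ne
  have := integral_tsum hmeas hne
  rw [this]
  congr 1
  ext k
  rw [hg]
  simp only
  rw [integral_const_mul]
  congr 1
  have h1 : Integrable (fun y => (Ioo (a k) (a k + 1 / a k)).indicator (fun _ => (1 : ℝ)) y /
      (gauss1 (Ioo (a k) (a k + 1 / a k))).toReal) (gauss1.restrict (Ioi x)) :=
    bump_integrable _ _ _ (lt_of_le_of_lt (Measure.restrict_apply_le _ _)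
      (gauss1_Ioo_lt_top _ _)) _
  have h2 : Integrable (fun y => (Ioo (a' k) (a' k + 1 / a' k)).indicator (fun _ => (1 : ℝ)) y /
      (gauss1 (Ioo (a' k) (a' k + 1 / a' k))).toReal) (gauss1.restrict (Ioi x)) :=
    bump_integrable _ _ _ (lt_of_le_of_lt (Measure.restrict_apply_le _ _)
      (gauss1_Ioo_lt_top _ _)) _
  rw [integral_sub h1 h2, bump_setIntegral, bump_setIntegral]

lemma lint_linear (p q c : ℝ) (hpq : p ≤ q) (hc : 0 ≤ c) (hp : 0 ≤ p) :
    ∫⁻ x in Ioo p q, ENNReal.ofReal (c * x) = ENNReal.ofReal (c * (q^2 - p^2) / 2) := by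
  have hint : IntegrableOn (fun x => c * x) (Ioo p q) volume :=
    (intervalIntegrable_iff_integrableOn_Ioo_of_le hpq).1
      ((continuous_const.mul continuous_id).intervalIntegrable p q)
  have hnn : 0 ≤ᵐ[volume.restrict (Ioo p q)] fun x => c * x :=
    (ae_restrict_iff' measurableSet_Ioo).2
      (Filter.Eventually.of_forall fun x hx => mul_nonneg hc (by linarith [hx.1]))
  rw [← ofReal_integral_eq_lintegral_ofReal hint hnn, ← integral_Ioc_eq_integral_Ioo,
    ← intervalIntegral.integral_of_le hpq, intervalIntegral.integral_const_mul, integral_id]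
  ring_nf

lemma lint_linear_Icc (p q c : ℝ) (hpq : p ≤ q) (hc : 0 ≤ c) (hp : 0 ≤ p) :
    ∫⁻ x in Icc p q, ENNReal.ofReal (c * x) = ENNReal.ofReal (c * (q^2 - p^2) / 2) := by
  rw [← setLIntegral_congr (MeasureTheory.Ioo_ae_eq_Icc (μ := volume) (a := p) (b := q)),
    lint_linear p q c hpq hc hp]

theorem stmt_11 :
    ∃ c > 0, ∃ C > 0, ∀ (a a' cf : ℕ → ℝ) (f : ℝ → ℝ),
      (∀ k, 2 < a k) → StrictMono a → StrictMono a' →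
      (∀ k, a k + 2 / a k < a' k) →
      (∀ k, a' k + 2 / a' k < a (k + 1)) →
      (∀ k, a (k + 1) < 2 * a k) →
      (∀ k, 0 < cf k) → Summable cf →
      (f = fun x => ∑' k, cf k *
          ((Set.Ioo (a k) (a k + 1 / a k)).indicator (fun _ => (1 : ℝ)) x /
              (gauss1 (Set.Ioo (a k) (a k + 1 / a k))).toReal -
            (Set.Ioo (a' k) (a' k + 1 / a' k)).indicator (fun _ => (1 : ℝ)) x /
              (gauss1 (Set.Ioo (a' k) (a' k + 1 / a' k))).toReal)) →
      ENNReal.ofReal c * ∑' k, ENNReal.ofReal (cf k * a k * (a' k - a k)) ≤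
          (∫⁻ x in Set.Ioi (0 : ℝ), ENNReal.ofReal (x *
            (|∫ y in Set.Ioi x, f y ∂gauss1| + |∫ y in Set.Iio (-x), f y ∂gauss1|))) ∧
        (∫⁻ x in Set.Ioi (0 : ℝ), ENNReal.ofReal (x *
            (|∫ y in Set.Ioi x, f y ∂gauss1| + |∫ y in Set.Iio (-x), f y ∂gauss1|))) ≤
          ENNReal.ofReal C * ∑' k, ENNReal.ofReal (cf k * a k * (a' k - a k)) := by
  refine ⟨1/2, by norm_num, 3, by norm_num, ?_⟩
  intro a a' cf f h2 hma hma' hgap1 hgap2 hgrow hcf hf_sum hf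
  -- basic positivity and ordering facts
  have hapos : ∀ k, 0 < a k := fun k => lt_trans two_pos (h2 k)
  have hdiva : ∀ k, 0 < 1 / a k := fun k => one_div_pos.2 (hapos k)
  have h2a : ∀ k, 2 / a k = 1 / a k + 1 / a k := fun k => by ring
  have h2' : ∀ k, 2 < a' k := fun k => by
    have := hgap1 k; have := h2 k; have := hdiva k; linarith [h2a k]
  have ha'pos : ∀ k, 0 < a' k := fun k => lt_trans two_pos (h2' k)
  have hdiva' : ∀ k, 0 < 1 / a' k := fun k => one_div_pos.2 (ha'pos k)
  have h2a' : ∀ k, 2 / a' k = 1 / a' k + 1 / a' k := fun k => by ring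
  have hlt1 : ∀ k, a k + 1 / a k < a' k := fun k => by
    have := hgap1 k; have := hdiva k; linarith [h2a k]
  have hlt1' : ∀ k, a' k + 1 / a' k < a (k + 1) := fun k => by
    have := hgap2 k; have := hdiva' k; linarith [h2a' k]
  have hjk : ∀ j k, j < k → a' j + 1 / a' j < a k := fun j k h =>
    lt_of_lt_of_le (hlt1' j) (hma.monotone (Nat.succ_le_of_lt h))
  have hbk : ∀ k, a' k < a' k + 1 / a' k := fun k => by have := hdiva' k; linarith
  have hak : ∀ k, a k < a k + 1 / a k := fun k => by have := hdiva k; linarith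
  have haa' : ∀ k, a k < a' k := fun k => lt_trans (hak k) (hlt1 k)
  have ha'2a : ∀ k, a' k < 2 * a k := fun k => by
    have := hgap2 k; have := hgrow k; have := hdiva' k; linarith [h2a' k]
  -- the tail integral formula
  have hFx : ∀ x, ∫ y in Set.Ioi x, f y ∂gauss1 =
      ∑' k, cf k * (ratio (a k) (a k + 1/a k) x - ratio (a' k) (a' k + 1/a' k) x) := fun x => by
    rw [hf]
    exact F_formula a a' cf hapos ha'pos (fun k => (hcf k).le) hf_sum x
  -- the negative-side integral vanishes
  have hGx : ∀ x : ℝ, 0 < x → ∫ y in Set.Iio (-x), f y ∂gauss1 = 0 := by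
    intro x hx
    refine setIntegral_eq_zero_of_forall_eq_zero fun y hy => ?_
    rw [hf]
    simp only [Set.mem_Iio] at hy
    have hzero : ∀ k, cf k *
        ((Set.Ioo (a k) (a k + 1 / a k)).indicator (fun _ => (1 : ℝ)) y /
            (gauss1 (Set.Ioo (a k) (a k + 1 / a k))).toReal -
          (Set.Ioo (a' k) (a' k + 1 / a' k)).indicator (fun _ => (1 : ℝ)) y /
            (gauss1 (Set.Ioo (a' k) (a' k + 1 / a' k))).toReal) = 0 := by
      intro k
      have h1 : y ∉ Set.Ioo (a k) (a k + 1 / a k) := fun h => by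
        have := h.1; have := h2 k; linarith
      have h2 : y ∉ Set.Ioo (a' k) (a' k + 1 / a' k) := fun h => by
        have := h.1; have := h2' k; linarith
      rw [Set.indicator_of_notMem h1, Set.indicator_of_notMem h2]
      simp
    exact (tsum_congr hzero).trans tsum_zero
  -- evaluation of the tail integral on the middle gap
  have hFmid : ∀ n, ∀ x ∈ Set.Ioo (a n + 1/a n) (a' n),
      ∫ y in Set.Ioi x, f y ∂gauss1 = -cf n := by
    intro n x hx
    rw [hFx x]
    rw [tsum_eq_single n ?_]
    · rw [ratio_eq_zero hx.1.le, ratio_eq_one (hbk n) hx.2.le]; ring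
    · intro j hj
      rcases lt_or_gt_of_ne hj with h | h
      · -- j < n : both bumps lie below x
        have hx1 : a j + 1/a j ≤ x :=
          le_of_lt (lt_trans (lt_trans (lt_trans (hlt1 j) (hbk j)) (hjk j n h))
            (lt_trans (hak n) hx.1))
        have hx2 : a' j + 1/a' j ≤ x :=
          le_of_lt (lt_trans (lt_trans (hjk j n h) (hak n)) hx.1)
        rw [ratio_eq_zero hx1, ratio_eq_zero hx2]; ring
      · -- j > n : both bumps lie above x
        have hx1 : x ≤ a j := le_of_lt (lt_trans hx.2 (lt_trans (hbk n) (hjk n j h)))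
        have hx2 : x ≤ a' j := le_of_lt (lt_trans (lt_of_le_of_lt hx1 (hak j)) (hlt1 j))
        rw [ratio_eq_one (hak j) hx1, ratio_eq_one (hbk j) hx2]; ring
  constructor
  · -- lower bound
    rw [← ENNReal.tsum_mul_left]
    have hterm : ∀ n, ENNReal.ofReal ((1:ℝ)/2) * ENNReal.ofReal (cf n * a n * (a' n - a n)) ≤
        ∫⁻ x in Set.Ioo (a n + 1/a n) (a' n), ENNReal.ofReal (x *
          (|∫ y in Set.Ioi x, f y ∂gauss1| + |∫ y in Set.Iio (-x), f y ∂gauss1|)) := by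
      intro n
      have hcalc : (∫⁻ x in Set.Ioo (a n + 1/a n) (a' n), ENNReal.ofReal (x *
          (|∫ y in Set.Ioi x, f y ∂gauss1| + |∫ y in Set.Iio (-x), f y ∂gauss1|)))
          = ∫⁻ x in Set.Ioo (a n + 1/a n) (a' n), ENNReal.ofReal (cf n * x) := by
        refine setLIntegral_congr_fun measurableSet_Ioo (fun x hx => ?_)
        have hx0 : 0 < x := by have := h2 n; have := hdiva n; linarith [hx.1]
        rw [hFmid n x hx, hGx x hx0, abs_neg, abs_of_pos (hcf n), abs_zero, add_zero,
          mul_comm]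
      rw [hcalc, lint_linear _ _ _ (hlt1 n).le (hcf n).le
        (by have := h2 n; have := hdiva n; linarith),
        ← ENNReal.ofReal_mul (by norm_num)]
      refine ENNReal.ofReal_le_ofReal ?_
      have hs1 : a n * (1/a n) = 1 := mul_one_div_cancel (hapos n).ne'
      have hs2 : 1/a n + 1/a n < a' n - a n := by linarith [hgap1 n, h2a n]
      have key : a n * (a' n - a n) ≤ (a' n)^2 - (a n + 1/a n)^2 := by
        nlinarith [hdiva n, haa' n, hapos n]
      nlinarith [mul_le_mul_of_nonneg_left key (hcf n).le]
    have hdisj : Pairwise (Function.onFun Disjoint (fun n => Set.Ioo (a n + 1/a n) (a' n))) := by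
      intro m n hmn
      have key : ∀ p q : ℕ, p < q →
          Disjoint (Set.Ioo (a p + 1/a p) (a' p)) (Set.Ioo (a q + 1/a q) (a' q)) := by
        intro p q hpq
        refine Set.disjoint_left.2 fun x hx hx' => ?_
        have h1 : a' p < a q := lt_trans (hbk p) (hjk p q hpq)
        have := hx.2; have := hx'.1; have := hdiva q
        linarith
      rcases lt_or_gt_of_ne hmn with h | h
      · exact key m n h
      · exact (key n m h).symm
    calc ∑' n, ENNReal.ofReal ((1:ℝ)/2) * ENNReal.ofReal (cf n * a n * (a' n - a n))
        ≤ ∑' n, ∫⁻ x in Set.Ioo (a n + 1/a n) (a' n), ENNReal.ofReal (x *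
            (|∫ y in Set.Ioi x, f y ∂gauss1| + |∫ y in Set.Iio (-x), f y ∂gauss1|)) :=
          ENNReal.tsum_le_tsum hterm
      _ = ∫⁻ x in ⋃ n, Set.Ioo (a n + 1/a n) (a' n), ENNReal.ofReal (x *
            (|∫ y in Set.Ioi x, f y ∂gauss1| + |∫ y in Set.Iio (-x), f y ∂gauss1|)) :=
          (lintegral_iUnion (fun _ => measurableSet_Ioo) hdisj _).symm
      _ ≤ ∫⁻ x in Set.Ioi (0:ℝ), ENNReal.ofReal (x *
            (|∫ y in Set.Ioi x, f y ∂gauss1| + |∫ y in Set.Iio (-x), f y ∂gauss1|)) := by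
          refine lintegral_mono_set ?_
          refine Set.iUnion_subset fun n x hx => ?_
          have := h2 n; have := hdiva n
          simp only [Set.mem_Ioi]
          linarith [hx.1]
  · -- upper bound
    have hstep1 : (∫⁻ x in Set.Ioi (0:ℝ), ENNReal.ofReal (x *
          (|∫ y in Set.Ioi x, f y ∂gauss1| + |∫ y in Set.Iio (-x), f y ∂gauss1|))) ≤
        ∫⁻ x in Set.Ioi (0:ℝ), ∑' k, ENNReal.ofReal (cf k * x *
          (Set.Icc (a k) (a' k + 1/a' k)).indicator (fun _ => (1:ℝ)) x) := by
      refine setLIntegral_mono' measurableSet_Ioi fun x hx => ?_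
      have hx0 : (0:ℝ) < x := hx
      rw [hGx x hx0, abs_zero, add_zero]
      by_cases hmem : ∃ n, x ∈ Set.Icc (a n) (a' n + 1/a' n)
      · obtain ⟨n, hn⟩ := hmem
        have hzero : ∀ j ≠ n, cf j * (ratio (a j) (a j + 1/a j) x -
            ratio (a' j) (a' j + 1/a' j) x) = 0 := by
          intro j hj
          rcases lt_or_gt_of_ne hj with h | h
          · have h1 : a' j + 1/a' j ≤ x := le_trans (le_of_lt (hjk j n h)) hn.1
            have h0 : a j + 1/a j ≤ x :=
              le_trans (le_of_lt (lt_trans (hlt1 j) (hbk j))) h1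
            rw [ratio_eq_zero h0, ratio_eq_zero h1]; ring
          · have h1 : x ≤ a j := le_trans hn.2 (le_of_lt (hjk n j h))
            have h2 : x ≤ a' j := le_trans h1 (le_of_lt (haa' j))
            rw [ratio_eq_one (hak j) h1, ratio_eq_one (hbk j) h2]; ring
        have hFle : |∫ y in Set.Ioi x, f y ∂gauss1| ≤ cf n := by
          rw [hFx x, tsum_eq_single n hzero, abs_mul, abs_of_pos (hcf n)]
          have h1 := ratio_nonneg (a n) (a n + 1/a n) x
          have h2 := ratio_le_one (a n) (a n + 1/a n) x
          have h3 := ratio_nonneg (a' n) (a' n + 1/a' n) x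
          have h4 := ratio_le_one (a' n) (a' n + 1/a' n) x
          have habs : |ratio (a n) (a n + 1/a n) x - ratio (a' n) (a' n + 1/a' n) x| ≤ 1 :=
            abs_le.2 ⟨by linarith, by linarith⟩
          nlinarith [hcf n]
        refine le_trans ?_ (ENNReal.le_tsum n)
        refine ENNReal.ofReal_le_ofReal ?_
        rw [Set.indicator_of_mem hn, mul_one]
        nlinarith [abs_nonneg (∫ y in Set.Ioi x, f y ∂gauss1)]
      · push_neg at hmem
        have hFzero : (∫ y in Set.Ioi x, f y ∂gauss1) = 0 := by
          rw [hFx x]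
          refine (tsum_congr fun j => ?_).trans tsum_zero
          have hj := hmem j
          rw [Set.mem_Icc, not_and_or] at hj
          rcases hj with hj | hj
          · push_neg at hj
            have h1 : x ≤ a j := hj.le
            have h2 : x ≤ a' j := le_trans h1 (le_of_lt (haa' j))
            rw [ratio_eq_one (hak j) h1, ratio_eq_one (hbk j) h2]; ring
          · push_neg at hj
            have h1 : a' j + 1/a' j ≤ x := hj.le
            have h0 : a j + 1/a j ≤ x :=
              le_trans (le_of_lt (lt_trans (hlt1 j) (hbk j))) h1
            rw [ratio_eq_zero h0, ratio_eq_zero h1]; ring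
        rw [hFzero, abs_zero, mul_zero, ENNReal.ofReal_zero]
        exact zero_le
    have hstep2 : (∫⁻ x in Set.Ioi (0:ℝ), ∑' k, ENNReal.ofReal (cf k * x *
          (Set.Icc (a k) (a' k + 1/a' k)).indicator (fun _ => (1:ℝ)) x))
        = ∑' k, ∫⁻ x in Set.Ioi (0:ℝ), ENNReal.ofReal (cf k * x *
          (Set.Icc (a k) (a' k + 1/a' k)).indicator (fun _ => (1:ℝ)) x) := by
      refine lintegral_tsum fun k => Measurable.aemeasurable ?_
      exact ((measurable_id.const_mul (cf k)).mul
        (measurable_const.indicator measurableSet_Icc)).ennreal_ofReal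
    have hstep3 : ∀ k, (∫⁻ x in Set.Ioi (0:ℝ), ENNReal.ofReal (cf k * x *
          (Set.Icc (a k) (a' k + 1/a' k)).indicator (fun _ => (1:ℝ)) x))
        = ENNReal.ofReal (cf k * ((a' k + 1/a' k)^2 - (a k)^2) / 2) := by
      intro k
      have hpt : ∀ x : ℝ, ENNReal.ofReal (cf k * x *
            (Set.Icc (a k) (a' k + 1/a' k)).indicator (fun _ => (1:ℝ)) x)
          = (Set.Icc (a k) (a' k + 1/a' k)).indicator (fun x => ENNReal.ofReal (cf k * x)) x := by
        intro x
        by_cases h : x ∈ Set.Icc (a k) (a' k + 1/a' k)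
        · rw [Set.indicator_of_mem h, Set.indicator_of_mem h, mul_one]
        · rw [Set.indicator_of_notMem h, Set.indicator_of_notMem h, mul_zero,
            ENNReal.ofReal_zero]
      rw [lintegral_congr hpt, lintegral_indicator measurableSet_Icc,
        Measure.restrict_restrict measurableSet_Icc]
      have hss : Set.Icc (a k) (a' k + 1/a' k) ∩ Set.Ioi (0:ℝ) = Set.Icc (a k) (a' k + 1/a' k) := by
        refine Set.inter_eq_left.2 fun y hy => ?_
        have := h2 k
        simp only [Set.mem_Ioi]
        linarith [hy.1]
      rw [hss]
      exact lint_linear_Icc _ _ _ (le_of_lt (lt_trans (haa' k) (hbk k)))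
        (hcf k).le (by have := h2 k; linarith)
    have hstep4 : ∀ k, ENNReal.ofReal (cf k * ((a' k + 1/a' k)^2 - (a k)^2) / 2) ≤
        ENNReal.ofReal (3:ℝ) * ENNReal.ofReal (cf k * a k * (a' k - a k)) := by
      intro k
      rw [← ENNReal.ofReal_mul (by norm_num)]
      refine ENNReal.ofReal_le_ofReal ?_
      have ht1 : 1/a' k < 1/a k := one_div_lt_one_div_of_lt (hapos k) (haa' k)
      have ht2 : 1/a' k < 1/2 := one_div_lt_one_div_of_lt two_pos (h2' k)
      have hs2 : 1/a k + 1/a k < a' k - a k := by linarith [hgap1 k, h2a k]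
      have key : ((a' k + 1/a' k)^2 - (a k)^2) / 2 ≤ 3 * (a k * (a' k - a k)) := by
        nlinarith [hdiva' k, hapos k, h2 k, ha'2a k, haa' k]
      nlinarith [mul_le_mul_of_nonneg_left key (hcf k).le]
    calc (∫⁻ x in Set.Ioi (0:ℝ), ENNReal.ofReal (x *
            (|∫ y in Set.Ioi x, f y ∂gauss1| + |∫ y in Set.Iio (-x), f y ∂gauss1|)))
        ≤ ∑' k, ∫⁻ x in Set.Ioi (0:ℝ), ENNReal.ofReal (cf k * x *
            (Set.Icc (a k) (a' k + 1/a' k)).indicator (fun _ => (1:ℝ)) x) := by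
          rw [← hstep2]; exact hstep1
      _ ≤ ∑' k, ENNReal.ofReal (3:ℝ) * ENNReal.ofReal (cf k * a k * (a' k - a k)) := by
          refine ENNReal.tsum_le_tsum fun k => ?_
          rw [hstep3 k]; exact hstep4 k
      _ = ENNReal.ofReal (3:ℝ) * ∑' k, ENNReal.ofReal (cf k * a k * (a' k - a k)) :=
          ENNReal.tsum_mul_left
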